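/- Let F be a field and let α ∈ F be such that the Weierstrass curve E : y² + xy − αy = x³ − αx² over F is nonsingular (i.e., its discriminant is nonzero). Then the point P = (0, 0) lies on E, has exact order 4 in the group of points E(F), and the x-coordinate of 2P equals α. -/

import Mathlib

/-- The `x`-coordinate of a nonsingular rational point on a Weierstrass curve
(with the point at infinity sent to `0`). -/
noncomputable def ptX {F : Type*} [Field F] {W : WeierstrassCurve.Affine F} : W.Point → F
  | .zero => 0
  | .some x _ _ => x

open WeierstrassCurve.Affine in
lemma some_eq_some_aux {F : Type*} [Field F] {W : WeierstrassCurve.Affine F}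
    {x y x' y' : F} (hx : x = x') (hy : y = y') (h : W.Nonsingular x y)
    (h' : W.Nonsingular x' y') : Point.some _ _ h = Point.some _ _ h' := by
  subst hx; subst hy; rfl

open Classical in
/-- **The first `m = 4` family of Table 2.** On the nonsingular Weierstrass curve
`y² + xy - αy = x³ - αx²`, the point `P = (0, 0)` is a nonsingular point of exact order 4,
and the `x`-coordinate of `2P` is `α`. -/
theorem order_four_family {F : Type*} [Field F] (α : F)
    (W : WeierstrassCurve.Affine F)
    (hW : W = { a₁ := 1, a₂ := -α, a₃ := -α, a₄ := 0, a₆ := 0 })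
    (hΔ : W.Δ ≠ 0) :
    ∃ h : W.Nonsingular 0 0, addOrderOf (WeierstrassCurve.Affine.Point.some _ _ h) = 4 ∧
      ptX (2 • WeierstrassCurve.Affine.Point.some _ _ h) = α := by
  subst hW
  set W : WeierstrassCurve.Affine F :=
    { a₁ := 1, a₂ := -α, a₃ := -α, a₄ := 0, a₆ := 0 } with hWdef
  have hα : α ≠ 0 := by
    rintro rfl
    apply hΔ
    simp [hWdef, WeierstrassCurve.Δ, WeierstrassCurve.b₂, WeierstrassCurve.b₄,
      WeierstrassCurve.b₆, WeierstrassCurve.b₈]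
  have h : W.Nonsingular 0 0 := by
    rw [WeierstrassCurve.Affine.nonsingular_zero]
    exact ⟨rfl, Or.inl (neg_ne_zero.mpr hα)⟩
  have h₂ : W.Nonsingular α 0 := by
    rw [WeierstrassCurve.Affine.nonsingular_iff]
    refine ⟨by rw [WeierstrassCurve.Affine.equation_iff]; ring, Or.inl ?_⟩
    show (1 : F) * 0 ≠ 3 * α ^ 2 + 2 * (-α) * α + 0
    intro hc
    apply hα
    have h2 : α ^ 2 = 0 := by linear_combination -hc
    exact pow_eq_zero_iff (n := 2) (by norm_num) |>.mp h2
  -- key coordinate computations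
  have hy0 : (0 : F) ≠ W.negY 0 0 := by
    simp [WeierstrassCurve.Affine.negY, hWdef]
    exact fun hc => hα hc.symm
  have hslope : W.slope 0 0 0 0 = 0 := by
    rw [WeierstrassCurve.Affine.slope_of_Y_ne rfl hy0]
    simp [hWdef]
  have hx2 : W.addX 0 0 (W.slope 0 0 0 0) = α := by
    rw [hslope]; simp [WeierstrassCurve.Affine.addX, hWdef]
  have hy2 : W.addY 0 0 0 (W.slope 0 0 0 0) = 0 := by
    rw [hslope]
    simp [WeierstrassCurve.Affine.addY, WeierstrassCurve.Affine.negAddY,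
      WeierstrassCurve.Affine.negY, WeierstrassCurve.Affine.addX, hWdef]
  have h2P : (2 : ℕ) • WeierstrassCurve.Affine.Point.some _ _ h
      = WeierstrassCurve.Affine.Point.some _ _ h₂ := by
    rw [two_smul, WeierstrassCurve.Affine.Point.add_self_of_Y_ne hy0]
    exact some_eq_some_aux hx2 hy2 _ _
  have hneg2 : (0 : F) = W.negY α 0 := by
    simp [WeierstrassCurve.Affine.negY, hWdef]
  have h4P : (4 : ℕ) • WeierstrassCurve.Affine.Point.some _ _ h = 0 := by
    have : (4 : ℕ) • WeierstrassCurve.Affine.Point.some _ _ h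
        = (2 : ℕ) • ((2 : ℕ) • WeierstrassCurve.Affine.Point.some _ _ h) := by
      rw [← mul_smul]; norm_num
    rw [this, h2P, two_smul]
    exact WeierstrassCurve.Affine.Point.add_self_of_Y_eq hneg2
  have h2Pne : (2 : ℕ) • WeierstrassCurve.Affine.Point.some _ _ h ≠ 0 := by
    rw [h2P]
    exact fun hc => by simp [WeierstrassCurve.Affine.Point.zero_def] at hc
  refine ⟨h, ?_, ?_⟩
  · haveI : Fact (Nat.Prime 2) := ⟨Nat.prime_two⟩
    have := addOrderOf_eq_prime_pow (p := 2) (n := 1)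
      (x := WeierstrassCurve.Affine.Point.some _ _ h)
      (by simpa using h2Pne) (by simpa using h4P)
    simpa using this
  · rw [h2P]; rfl
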